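/- arXiv:0903.2240 — 10 statements merged into one kernel-verified Lean document; each statement's English description precedes it below -/
import Mathlib

section
/- If R is a commutative ring, I a proper ideal, and P a prime ideal of R with I ⊆ P, then P₀ = {(p, p+i) : p ∈ P, i ∈ I} is a prime ideal of R ⋈ I, and it is the unique prime ideal of R ⋈ I lying over P. -/
/-- The amalgamated duplication of a ring `R` along an ideal `I`, as a subring of `R × R`. -/
def dup (R : Type*) [CommRing R] (I : Ideal R) : Subring (R × R) where
  carrier := {x | x.2 - x.1 ∈ I}
  zero_mem' := by simp
  one_mem' := by simp
  add_mem' := by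
    intro a b ha hb
    show a.2 + b.2 - (a.1 + b.1) ∈ I
    have h : a.2 + b.2 - (a.1 + b.1) = (a.2 - a.1) + (b.2 - b.1) := by ring
    rw [h]; exact I.add_mem ha hb
  neg_mem' := by
    intro a ha
    show -a.2 - -a.1 ∈ I
    have h : -a.2 - -a.1 = -(a.2 - a.1) := by ring
    rw [h]; exact I.neg_mem ha
  mul_mem' := by
    intro a b ha hb
    show a.2 * b.2 - a.1 * b.1 ∈ I
    have h : a.2 * b.2 - a.1 * b.1 = a.2 * (b.2 - b.1) + b.1 * (a.2 - a.1) := by ring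
    rw [h]; exact I.add_mem (I.mul_mem_left _ hb) (I.mul_mem_left _ ha)

/-- The diagonal embedding `R → R ⋈ I`. -/
def diag (R : Type*) [CommRing R] (I : Ideal R) : R →+* dup R I where
  toFun r := ⟨(r, r), show r - r ∈ I by simp⟩
  map_one' := rfl
  map_mul' _ _ := rfl
  map_zero' := rfl
  map_add' _ _ := rfl

/-- if `I ⊆ P` with `P` prime, then `P₀ = {(p, p+i) : p ∈ P, i ∈ I}` is a
prime ideal of `R ⋈ I` and it is the unique prime of `R ⋈ I` lying over `P`. -/
theorem unique_prime_over_of_le (R : Type*) [CommRing R] (I P : Ideal R) (hI : I ≠ ⊤)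
    [P.IsPrime] (hIP : I ≤ P) :
    ∃ P₀ : Ideal (dup R I),
      (∀ x : dup R I, x ∈ P₀ ↔ ∃ p ∈ P, ∃ i ∈ I, (x : R × R) = (p, p + i)) ∧
      P₀.IsPrime ∧
      ∀ Q : Ideal (dup R I), Q.IsPrime → Q.comap (diag R I) = P → Q = P₀ := by
  set f : dup R I →+* R := (RingHom.fst R R).comp (dup R I).subtype with hf
  refine ⟨P.comap f, ?_, Ideal.IsPrime.comap f, ?_⟩
  · intro x
    constructor
    · intro hx
      refine ⟨(x : R × R).1, hx, (x : R × R).2 - (x : R × R).1, x.2, ?_⟩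
      ext <;> simp
    · rintro ⟨p, hp, i, hi, hx⟩
      show ((x : R × R)).1 ∈ P
      rw [hx]
      exact hp
  · intro Q hQ hQP
    have key : ∀ i : R, ∀ hi : i ∈ I, (⟨(0, i), show i - 0 ∈ I by simpa using hi⟩ : dup R I) ∈ Q := by
      intro i hi
      set a : dup R I := ⟨(0, i), show i - 0 ∈ I by simpa using hi⟩ with ha
      set b : dup R I := ⟨(i, 0), show (0:R) - i ∈ I by simpa using I.neg_mem hi⟩ with hb
      have hab : a * b = 0 := by
        apply Subtype.ext
        show ((0 : R), i) * (i, (0 : R)) = 0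
        simp
      have hd : diag R I i ∈ Q := by
        have : i ∈ Q.comap (diag R I) := hQP ▸ hIP hi
        exact this
      have hsum : a + b = diag R I i := by
        apply Subtype.ext
        show ((0 : R), i) + (i, (0 : R)) = (i, i)
        simp
      rcases hQ.mem_or_mem (hab ▸ Q.zero_mem) with h | h
      · exact h
      · have : a = diag R I i - b := by rw [← hsum]; ring
        rw [this]; exact Q.sub_mem hd h
    have decomp : ∀ x : dup R I, x = diag R I (x : R × R).1 +
        (⟨(0, (x : R × R).2 - (x : R × R).1), show ((x : R × R).2 - (x : R × R).1) - 0 ∈ I by rw [sub_zero]; exact x.2⟩ : dup R I) := by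
      intro x
      apply Subtype.ext
      show (x : R × R) = ((x : R × R).1, (x : R × R).1) + (0, (x : R × R).2 - (x : R × R).1)
      ext <;> simp
    ext x
    constructor
    · intro hx
      show f x ∈ P
      have h0 := key _ x.2
      have hd : diag R I (x : R × R).1 ∈ Q := by
        have := decomp x
        rw [this] at hx
        have := Q.sub_mem hx h0
        simpa using this
      have : (x : R × R).1 ∈ Q.comap (diag R I) := hd
      rw [hQP] at this
      exact this
    · intro hx
      have hp : (x : R × R).1 ∈ P := hx
      have hd : diag R I (x : R × R).1 ∈ Q := by
        rw [← hQP] at hp; exact hp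
      rw [decomp x]
      exact Q.add_mem hd (key _ x.2)
end

section
/- If R is a commutative ring, I a proper ideal, and P a prime ideal of R with I ⊄ P, then P₁ = {(p, p+i) : p ∈ P, i ∈ I} and P₂ = {(p+i, p) : p ∈ P, i ∈ I} are distinct prime ideals of R ⋈ I, their intersection is P₀ = {(p, p+i) : p ∈ P, i ∈ P ∩ I}, and P₁, P₂ are the only primes of R ⋈ I lying over P. -/
lemma dup_mem {R : Type*} [CommRing R] {I : Ideal R} {a b : R} (h : b - a ∈ I) :
    ((a, b) : R × R) ∈ dup R I := h

lemma dup_snd_sub_fst {R : Type*} [CommRing R] {I : Ideal R} (x : dup R I) :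
    (x : R × R).2 - (x : R × R).1 ∈ I := x.2

/-- if `P` is prime and `I ⊄ P`, then `P₁ = {(p, p+i)}` and `P₂ = {(p+i, p)}`
are distinct primes of `R ⋈ I`, `P₁ ∩ P₂ = P₀ = {(p, p+i) : p ∈ P, i ∈ P ∩ I}`, and
`P₁, P₂` are the only primes of `R ⋈ I` lying over `P`. -/
theorem two_primes_over_of_not_le (R : Type*) [CommRing R] (I P : Ideal R) (hI : I ≠ ⊤)
    [P.IsPrime] (hIP : ¬ I ≤ P) :
    ∃ P₁ P₂ : Ideal (dup R I),
      (∀ x : dup R I, x ∈ P₁ ↔ ∃ p ∈ P, ∃ i ∈ I, (x : R × R) = (p, p + i)) ∧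
      (∀ x : dup R I, x ∈ P₂ ↔ ∃ p ∈ P, ∃ i ∈ I, (x : R × R) = (p + i, p)) ∧
      P₁ ≠ P₂ ∧ P₁.IsPrime ∧ P₂.IsPrime ∧
      (∀ x : dup R I, x ∈ P₁ ⊓ P₂ ↔ ∃ p ∈ P, ∃ i ∈ P ⊓ I, (x : R × R) = (p, p + i)) ∧
      ∀ Q : Ideal (dup R I), Q.IsPrime → Q.comap (diag R I) = P → Q = P₁ ∨ Q = P₂ := by
  set f₁ : dup R I →+* R := (RingHom.fst R R).comp (dup R I).subtype with hf₁
  set f₂ : dup R I →+* R := (RingHom.snd R R).comp (dup R I).subtype with hf₂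
  refine ⟨P.comap f₁, P.comap f₂, ?_, ?_, ?_, ?_, ?_, ?_, ?_⟩
  · intro x
    constructor
    · intro hx
      exact ⟨(x : R × R).1, hx, (x : R × R).2 - (x : R × R).1, dup_snd_sub_fst x, by simp⟩
    · rintro ⟨p, hp, i, hi, hx⟩
      show (x : R × R).1 ∈ P
      rw [hx]; exact hp
  · intro x
    constructor
    · intro hx
      refine ⟨(x : R × R).2, hx, (x : R × R).1 - (x : R × R).2, ?_, by simp⟩
      have := I.neg_mem (dup_snd_sub_fst x)
      rwa [neg_sub] at this
    · rintro ⟨p, hp, i, hi, hx⟩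
      show (x : R × R).2 ∈ P
      rw [hx]; exact hp
  · obtain ⟨i, hiI, hiP⟩ := Set.not_subset.mp hIP
    intro h
    have hmem : (⟨(0, i), dup_mem (by simpa using hiI)⟩ : dup R I) ∈ P.comap f₁ := by
      show (0 : R) ∈ P; exact P.zero_mem
    rw [h] at hmem
    exact hiP hmem
  · exact Ideal.IsPrime.comap f₁
  · exact Ideal.IsPrime.comap f₂
  · intro x
    constructor
    · rintro ⟨h1, h2⟩
      exact ⟨(x : R × R).1, h1, (x : R × R).2 - (x : R × R).1,
        ⟨P.sub_mem h2 h1, dup_snd_sub_fst x⟩, by simp⟩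
    · rintro ⟨p, hp, i, hi, hx⟩
      constructor
      · show (x : R × R).1 ∈ P; rw [hx]; exact hp
      · show (x : R × R).2 ∈ P; rw [hx]; exact P.add_mem hp hi.1
  · intro Q hQ hQP
    have key : (∀ i : R, ∀ hi : i ∈ I, (⟨(i, 0), dup_mem (by simpa using I.neg_mem hi)⟩ : dup R I) ∈ Q) ∨
        (∀ i : R, ∀ hi : i ∈ I, (⟨(0, i), dup_mem (by simpa using hi)⟩ : dup R I) ∈ Q) := by
      by_contra h
      push_neg at h
      obtain ⟨⟨a, haI, haQ⟩, ⟨b, hbI, hbQ⟩⟩ := h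
      have hab : (⟨(a, 0), dup_mem (by simpa using I.neg_mem haI)⟩ : dup R I) *
          (⟨(0, b), dup_mem (by simpa using hbI)⟩ : dup R I) = 0 := by
        apply Subtype.ext
        show ((a : R) * 0, (0 : R) * b) = (0, 0)
        simp
      have h0 : (⟨(a, 0), dup_mem (by simpa using I.neg_mem haI)⟩ : dup R I) *
          (⟨(0, b), dup_mem (by simpa using hbI)⟩ : dup R I) ∈ Q := by
        rw [hab]; exact Q.zero_mem
      rcases hQ.mem_or_mem h0 with h | h
      · exact haQ h
      · exact hbQ h
    rcases key with key | key
    · right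
      ext x
      set d : dup R I := ⟨((x : R × R).1 - (x : R × R).2, 0),
        dup_mem (by simpa [neg_sub] using dup_snd_sub_fst x)⟩ with hdd
      have hd : d ∈ Q := by
        have := I.neg_mem (dup_snd_sub_fst x)
        rw [neg_sub] at this
        exact key _ this
      have hdecomp : (x : dup R I) = diag R I (x : R × R).2 + d := by
        apply Subtype.ext
        show (x : R × R) = ((x : R × R).2 + ((x : R × R).1 - (x : R × R).2), (x : R × R).2 + 0)
        ext <;> simp
      have hdiag : diag R I (x : R × R).2 = x - d := eq_sub_of_add_eq hdecomp.symm
      constructor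
      · intro hx
        show (x : R × R).2 ∈ P
        rw [← hQP]
        show diag R I (x : R × R).2 ∈ Q
        rw [hdiag]
        exact Q.sub_mem hx hd
      · intro hx
        have h2 : (x : R × R).2 ∈ P := hx
        rw [← hQP] at h2
        rw [hdecomp]
        exact Q.add_mem h2 hd
    · left
      ext x
      set d : dup R I := ⟨(0, (x : R × R).2 - (x : R × R).1),
        dup_mem (by simpa using dup_snd_sub_fst x)⟩ with hdd
      have hd : d ∈ Q := key _ (dup_snd_sub_fst x)
      have hdecomp : (x : dup R I) = diag R I (x : R × R).1 + d := by
        apply Subtype.ext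
        show (x : R × R) = ((x : R × R).1 + 0, (x : R × R).1 + ((x : R × R).2 - (x : R × R).1))
        ext <;> simp
      have hdiag : diag R I (x : R × R).1 = x - d := eq_sub_of_add_eq hdecomp.symm
      constructor
      · intro hx
        show (x : R × R).1 ∈ P
        rw [← hQP]
        show diag R I (x : R × R).1 ∈ Q
        rw [hdiag]
        exact Q.sub_mem hx hd
      · intro hx
        have h1 : (x : R × R).1 ∈ P := hx
        rw [← hQP] at h1
        rw [hdecomp]
        exact Q.add_mem h1 hd
end

section
/- A commutative ring R is von Neumann regular if and only if the amalgamated duplication R ⋈ I is von Neumann regular, for any proper ideal I of R. -/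
/-- `R` is von Neumann regular iff `R ⋈ I` is von Neumann regular. -/
theorem vonNeumannRegular_iff_dup (R : Type*) [CommRing R] (I : Ideal R) (hI : I ≠ ⊤) :
    (∀ a : R, ∃ x : R, a = a * x * a) ↔
    (∀ a : dup R I, ∃ x : dup R I, a = a * x * a) := by
  constructor
  · intro h a
    obtain ⟨⟨r, s⟩, hrs⟩ := a
    obtain ⟨x, hx⟩ := h r
    obtain ⟨u, hu⟩ := h s
    have hrs' : s - r ∈ I := hrs
    set k := s - s * x * s with hk_def
    have hk : k ∈ I := by
      have : k = (s - r) * (1 - x * (s + r)) + (r - r * x * r) := by ring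
      rw [this, ← hx]
      simpa using I.mul_mem_right _ hrs'
    set y := x + u * k * u with hy_def
    have hyx : y - x ∈ I := by
      have : y - x = u * k * u := by ring
      rw [this]
      exact I.mul_mem_right _ (I.mul_mem_left _ hk)
    have h2 : s * u * k = k := by
      have : s * u * k = (s * u * s) * (1 - x * s) := by
        rw [hk_def]; ring
      rw [this, ← hu, hk_def]; ring
    have hs : s = s * y * s := by
      have h1 : s * y * s = s * x * s + s * u * (s * u * k) := by ring
      rw [h1, h2, h2, hk_def]; ring
    refine ⟨⟨(x, y), hyx⟩, ?_⟩
    apply Subtype.ext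
    apply Prod.ext
    · exact hx
    · exact hs
  · intro h a
    obtain ⟨⟨⟨x, y⟩, hxy⟩, hx⟩ := h ⟨(a, a), show a - a ∈ I by simp⟩
    refine ⟨x, ?_⟩
    have := congrArg (fun z : dup R I => (z : R × R).1) hx
    simpa using this
end

section
/- If I² = 0, then the amalgamated duplication R ⋈ I is isomorphic as a ring to the trivial extension (idealization) R ⋉ I. -/
/-- if `I² = 0`, then `R ⋈ I` is ring-isomorphic to the trivial extension
(idealization) `R ⋉ I`. -/
theorem dup_iso_trivSqZeroExt (R : Type*) [CommRing R] (I : Ideal R) (hsq : I * I = ⊥) :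
    Nonempty (dup R I ≃+* TrivSqZeroExt R I) := by
  refine ⟨{ toFun := fun x => (x.1.1, ⟨x.1.2 - x.1.1, x.2⟩)
            invFun := fun y => ⟨(y.1, y.1 + y.2), show (y.1 + (y.2:R)) - y.1 ∈ I by simp⟩
            left_inv := ?_, right_inv := ?_, map_mul' := ?_, map_add' := ?_ }⟩
  · rintro ⟨⟨a, b⟩, h⟩
    ext <;> simp
  · rintro ⟨r, i⟩
    ext <;> simp
  · rintro ⟨⟨a, b⟩, ha⟩ ⟨⟨c, d⟩, hc⟩
    have key : (b - a) * (d - c) = 0 := by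
      have : (b - a) * (d - c) ∈ I * I := Ideal.mul_mem_mul ha hc
      rwa [hsq, Ideal.mem_bot] at this
    ext
    · rfl
    · show b * d - a * c = a * (d - c) + (b - a) * c
      have : b * d - a * c = a * (d - c) + (b - a) * c + (b - a) * (d - c) := by ring
      rw [this, key, add_zero]
  · rintro ⟨⟨a, b⟩, ha⟩ ⟨⟨c, d⟩, hc⟩
    ext
    · rfl
    · show b + d - (a + c) = (b - a) + (d - c)
      ring
end

section
/- If I is a principal ideal of a commutative ring R, then the ideals O₁ = {(0, i) : i ∈ I} and O₂ = {(i, 0) : i ∈ I} are principal ideals of R ⋈ I, generated by (0, a) and (a, 0) respectively, where I = Ra. -/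
/-- if `I = Ra` is principal, then `O₁ = {(0,i) : i ∈ I}` and
`O₂ = {(i,0) : i ∈ I}` are principal ideals of `R ⋈ I`, generated by `(0,a)` and `(a,0)`. -/
theorem O1_O2_principal (R : Type*) [CommRing R] (I : Ideal R) (a : R)
    (ha : I = Ideal.span {a}) (hI : I ≠ ⊤) :
    ∃ o₁ o₂ : dup R I, (o₁ : R × R) = (0, a) ∧ (o₂ : R × R) = (a, 0) ∧
      (∀ x : dup R I, ((x : R × R).1 = 0 ∧ (x : R × R).2 ∈ I) ↔ x ∈ Ideal.span {o₁}) ∧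
      (∀ x : dup R I, ((x : R × R).2 = 0 ∧ (x : R × R).1 ∈ I) ↔ x ∈ Ideal.span {o₂}) := by

  have haI : a ∈ I := ha ▸ Ideal.mem_span_singleton_self a
  refine ⟨⟨(0, a), show a - 0 ∈ I by simpa using haI⟩, ⟨(a, 0), show (0:R) - a ∈ I by simpa using I.neg_mem haI⟩, rfl, rfl, ?_, ?_⟩
  · intro x
    constructor
    · rintro ⟨h1, h2⟩
      have h2' : (x : R × R).2 ∈ Ideal.span {a} := by rw [← ha]; exact h2
      obtain ⟨r, hr⟩ := Ideal.mem_span_singleton.mp h2'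
      rw [Ideal.mem_span_singleton]
      exact ⟨diag R I r, Subtype.ext (Prod.ext (by simp [diag, h1]) (by simp [diag, hr, mul_comm]))⟩
    · intro hx
      rw [Ideal.mem_span_singleton] at hx
      obtain ⟨c, hc⟩ := hx
      have h1 : (x : R × R).1 = 0 * (c : R × R).1 := congrArg Prod.fst (congrArg Subtype.val hc)
      have h2 : (x : R × R).2 = a * (c : R × R).2 := congrArg Prod.snd (congrArg Subtype.val hc)
      exact ⟨by simpa using h1, h2 ▸ I.mul_mem_right _ haI⟩
  · intro x
    constructor
    · rintro ⟨h1, h2⟩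
      have h2' : (x : R × R).1 ∈ Ideal.span {a} := by rw [← ha]; exact h2
      obtain ⟨r, hr⟩ := Ideal.mem_span_singleton.mp h2'
      rw [Ideal.mem_span_singleton]
      exact ⟨diag R I r, Subtype.ext (Prod.ext (by simp [diag, hr, mul_comm]) (by simp [diag, h1]))⟩
    · intro hx
      rw [Ideal.mem_span_singleton] at hx
      obtain ⟨c, hc⟩ := hx
      have h1 : (x : R × R).1 = a * (c : R × R).1 := congrArg Prod.fst (congrArg Subtype.val hc)
      have h2 : (x : R × R).2 = 0 * (c : R × R).2 := congrArg Prod.snd (congrArg Subtype.val hc)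
      exact ⟨by simpa using h2, h1 ▸ I.mul_mem_right _ haI⟩
end

section
/- Let R be an integral domain and I = Ra a nonzero principal proper ideal. Then in R ⋈ I, the ideals O₁ = {(0, i) : i ∈ I} and O₂ = {(i, 0) : i ∈ I} are not projective as R ⋈ I-modules. -/
/-- The first projection `R ⋈ I → R`. -/
def pr1 (R : Type*) [CommRing R] (I : Ideal R) : dup R I →+* R :=
  (RingHom.fst R R).comp (dup R I).subtype

/-- The second projection `R ⋈ I → R`. -/
def pr2 (R : Type*) [CommRing R] (I : Ideal R) : dup R I →+* R :=
  (RingHom.snd R R).comp (dup R I).subtype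

/-- Auxiliary: a cyclic ideal `M = S·m₀` is not projective if there is `j` with `j·m₀ = 0`
but no `e` with `j·e = 0` and `e·m₀ = m₀`. -/
lemma aux_not_projective {S : Type*} [CommRing S] (M : Ideal S) (m₀ j : S) (hm₀ : m₀ ∈ M)
    (hgen : ∀ m ∈ M, ∃ s : S, s * m₀ = m) (hjm : j * m₀ = 0)
    (hcon : ∀ e : S, j * e = 0 → e * m₀ = m₀ → False) :
    ¬ Module.Projective S M := by
  intro hP
  set m : M := ⟨m₀, hm₀⟩ with hm
  set f : S →ₗ[S] M := LinearMap.toSpanSingleton S M m with hfdef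
  have hf : Function.Surjective f := by
    rintro ⟨x, hx⟩
    obtain ⟨s, hs⟩ := hgen x hx
    refine ⟨s, Subtype.ext ?_⟩
    simpa [hfdef, LinearMap.toSpanSingleton_apply, hm, smul_eq_mul] using hs
  obtain ⟨h, hh⟩ := Module.projective_lifting_property f LinearMap.id hf
  set e : S := h m with he
  have he1 : e * m₀ = m₀ := by
    have h1 : f (h m) = m := by
      have := congrArg (fun g => g m) hh
      simpa using this
    have := congrArg Subtype.val h1
    simpa [hfdef, LinearMap.toSpanSingleton_apply, hm, smul_eq_mul] using this
  have he2 : j * e = 0 := by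
    have hz : j • m = (0 : M) := by
      refine Subtype.ext ?_
      simpa [hm, smul_eq_mul] using hjm
    calc j * e = j • h m := rfl
      _ = h (j • m) := (h.map_smul j m).symm
      _ = 0 := by rw [hz, map_zero]
  exact hcon e he2 he1

/-- if `R` is a domain and `I = Ra ≠ 0` is a principal proper ideal, then
`O₁ = ker π₁ = {(0,i) : i ∈ I}` and `O₂ = ker π₂ = {(i,0) : i ∈ I}` are not projective
`R ⋈ I`-modules. -/
theorem O1_O2_not_projective (R : Type*) [CommRing R] [IsDomain R] (I : Ideal R) (a : R)
    (ha : I = Ideal.span {a}) (hne : I ≠ ⊥) (hI : I ≠ ⊤) :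
    ¬ Module.Projective (dup R I) (RingHom.ker (pr1 R I)) ∧
    ¬ Module.Projective (dup R I) (RingHom.ker (pr2 R I)) := by
  have haI : a ∈ I := ha ▸ Ideal.mem_span_singleton_self a
  have ha0 : a ≠ 0 := by
    rintro rfl
    exact hne (ha.trans (Ideal.span_singleton_eq_bot.mpr rfl))
  have hmem1 : ((0 : R), a) ∈ dup R I := by
    show a - 0 ∈ I
    simpa using haI
  have hmem2 : (a, (0 : R)) ∈ dup R I := by
    show (0 : R) - a ∈ I
    simpa using I.neg_mem haI
  constructor
  · refine aux_not_projective _ ⟨(0, a), hmem1⟩ ⟨(a, 0), hmem2⟩ ?_ ?_ ?_ ?_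
    · show pr1 R I _ = 0
      rfl
    · rintro ⟨⟨x1, x2⟩, hx⟩ hm
      have hx1 : x1 = 0 := hm
      have hx2 : x2 ∈ I := by
        have : x2 - x1 ∈ I := hx
        simpa [hx1] using this
      rw [ha, Ideal.mem_span_singleton] at hx2
      obtain ⟨r, hr⟩ := hx2
      refine ⟨diag R I r, Subtype.ext (Prod.ext ?_ ?_)⟩
      · show r * 0 = x1
        simp [hx1]
      · show r * a = x2
        rw [hr]; ring
    · refine Subtype.ext (Prod.ext ?_ ?_) <;> show _ = (0 : R) <;> simp
    · rintro ⟨⟨e1, e2⟩, he⟩ hj hm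
      have h1 : a * e1 = 0 := congrArg (fun x => x.val.1) hj
      have h2 : e2 * a = a := congrArg (fun x => x.val.2) hm
      have he1 : e1 = 0 := by
        rcases mul_eq_zero.mp h1 with h | h
        · exact absurd h ha0
        · exact h
      have he2 : e2 = 1 := by
        have h3 : (e2 - 1) * a = 0 := by linear_combination h2
        rcases mul_eq_zero.mp h3 with h | h
        · exact sub_eq_zero.mp h
        · exact absurd h ha0
      have : e2 - e1 ∈ I := he
      rw [he1, he2] at this
      simp only [sub_zero] at this
      exact hI ((Ideal.eq_top_iff_one I).mpr this)
  · refine aux_not_projective _ ⟨(a, 0), hmem2⟩ ⟨(0, a), hmem1⟩ ?_ ?_ ?_ ?_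
    · show pr2 R I _ = 0
      rfl
    · rintro ⟨⟨x1, x2⟩, hx⟩ hm
      have hx2 : x2 = 0 := hm
      have hx1 : x1 ∈ I := by
        have : x2 - x1 ∈ I := hx
        rw [hx2] at this
        simpa using I.neg_mem this
      rw [ha, Ideal.mem_span_singleton] at hx1
      obtain ⟨r, hr⟩ := hx1
      refine ⟨diag R I r, Subtype.ext (Prod.ext ?_ ?_)⟩
      · show r * a = x1
        rw [hr]; ring
      · show r * 0 = x2
        simp [hx2]
    · refine Subtype.ext (Prod.ext ?_ ?_) <;> show _ = (0 : R) <;> simp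
    · rintro ⟨⟨e1, e2⟩, he⟩ hj hm
      have h1 : a * e2 = 0 := congrArg (fun x => x.val.2) hj
      have h2 : e1 * a = a := congrArg (fun x => x.val.1) hm
      have he2 : e2 = 0 := by
        rcases mul_eq_zero.mp h1 with h | h
        · exact absurd h ha0
        · exact h
      have he1 : e1 = 1 := by
        have h3 : (e1 - 1) * a = 0 := by linear_combination h2
        rcases mul_eq_zero.mp h3 with h | h
        · exact sub_eq_zero.mp h
        · exact absurd h ha0
      have : e2 - e1 ∈ I := he
      rw [he1, he2] at this
      have : (1 : R) ∈ I := by simpa using I.neg_mem this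
      exact hI ((Ideal.eq_top_iff_one I).mpr this)
end

section
/- Let R be an integral domain and I = Ra a nonzero principal proper ideal. There are short exact sequences of R ⋈ I-modules 0 → O₂ → R ⋈ I → O₁ → 0 and 0 → O₁ → R ⋈ I → O₂ → 0, where the middle maps are multiplication by (0, a) and (a, 0) respectively; in particular O₁ and O₂ are m-presented for every positive integer m. -/
set_option synthInstance.maxHeartbeats 1000000
set_option maxHeartbeats 1000000

/-- `NPresented R m M` means `M` is an `m`-presented `R`-module: there is an exact
sequence `F_m → ⋯ → F_0 → M → 0` with each `F_j` finitely generated free. -/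
def NPresented (R : Type u) [Ring R] : ℕ → ∀ (M : Type u) [AddCommGroup M] [Module R M], Prop
  | 0 => fun M _ _ => Module.Finite R M
  | n + 1 => fun M _ _ =>
      ∃ (k : ℕ) (f : (Fin k → R) →ₗ[R] M),
        Function.Surjective f ∧ NPresented R n (LinearMap.ker f)

theorem NPresented_of_equiv {R : Type u} [Ring R] {M N : Type u} [AddCommGroup M] [Module R M]
    [AddCommGroup N] [Module R N] (e : M ≃ₗ[R] N) :
    ∀ n : ℕ, NPresented R n M → NPresented R n N := by
  intro n
  induction n with
  | zero =>
    intro h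
    have : Module.Finite R M := h
    exact Module.Finite.equiv e
  | succ n ih =>
    rintro ⟨k, f, hf, hker⟩
    refine ⟨k, e.toLinearMap ∘ₗ f, e.surjective.comp hf, ?_⟩
    have : LinearMap.ker (e.toLinearMap ∘ₗ f) = LinearMap.ker f := by
      rw [LinearMap.ker_comp, LinearEquiv.ker, Submodule.comap_bot]
    rw [this]
    exact hker

theorem NPresented_succ_of_surjective {S : Type u} [CommRing S] {M : Type u} [AddCommGroup M]
    [Module S M] (g : S →ₗ[S] M) (hg : Function.Surjective g) {n : ℕ}
    (h : NPresented S n (LinearMap.ker g)) : NPresented S (n + 1) M := by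
  let e : (Fin 1 → S) ≃ₗ[S] S := LinearEquiv.funUnique (Fin 1) S S
  refine ⟨1, g ∘ₗ e.toLinearMap, hg.comp e.surjective, ?_⟩
  have h1 : LinearMap.ker (g ∘ₗ e.toLinearMap)
      = (LinearMap.ker g).map e.symm.toLinearMap := by
    rw [LinearMap.ker_comp, ← Submodule.comap_equiv_eq_map_symm]
  rw [h1]
  exact NPresented_of_equiv (e.symm.submoduleMap _) n h

/-- with `O₁ = ker π₁` and `O₂ = ker π₂`, there are short exact sequences
`0 → O₂ → R ⋈ I → O₁ → 0` and `0 → O₁ → R ⋈ I → O₂ → 0` whose middle maps are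
multiplication by `(0,a)` and `(a,0)`; in particular `O₁` and `O₂` are `m`-presented for
every `m`. -/
theorem O1_O2_exact_sequences (R : Type u) [CommRing R] [IsDomain R] (I : Ideal R) (a : R)
    (ha : I = Ideal.span {a}) (hne : I ≠ ⊥) (hI : I ≠ ⊤) :
    ∃ o₁ o₂ : dup R I, (o₁ : R × R) = (0, a) ∧ (o₂ : R × R) = (a, 0) ∧
      (∃ u : dup R I →ₗ[dup R I] (RingHom.ker (pr1 R I)),
        (∀ x : dup R I, (u x : dup R I) = x * o₁) ∧ Function.Surjective u ∧
          LinearMap.ker u = (RingHom.ker (pr2 R I) : Ideal (dup R I))) ∧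
      (∃ v : dup R I →ₗ[dup R I] (RingHom.ker (pr2 R I)),
        (∀ x : dup R I, (v x : dup R I) = x * o₂) ∧ Function.Surjective v ∧
          LinearMap.ker v = (RingHom.ker (pr1 R I) : Ideal (dup R I))) ∧
      (∀ m : ℕ, NPresented (dup R I) m (RingHom.ker (pr1 R I)) ∧
        NPresented (dup R I) m (RingHom.ker (pr2 R I))) := by
  have haI : a ∈ I := ha ▸ Ideal.mem_span_singleton_self a
  have ha0 : a ≠ 0 := by
    intro h
    apply hne
    rw [ha, h, Ideal.span_singleton_eq_bot]
  set S := dup R I with hS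
  have ho1 : ((0 : R), a) ∈ dup R I := by
    show a - 0 ∈ I; simpa using haI
  have ho2 : (a, (0 : R)) ∈ dup R I := by
    show 0 - a ∈ I; simpa using I.neg_mem haI
  set o₁ : S := ⟨(0, a), ho1⟩ with ho₁def
  set o₂ : S := ⟨(a, 0), ho2⟩ with ho₂def
  -- membership facts
  have memker1 : ∀ x : S, x * o₁ ∈ RingHom.ker (pr1 R I) := by
    intro x
    show (x : R × R).1 * 0 = 0
    rw [mul_zero]
  have memker2 : ∀ x : S, x * o₂ ∈ RingHom.ker (pr2 R I) := by
    intro x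
    show (x : R × R).2 * 0 = 0
    rw [mul_zero]
  -- the linear maps
  let u : S →ₗ[S] (RingHom.ker (pr1 R I)) :=
    { toFun := fun x => ⟨x * o₁, memker1 x⟩
      map_add' := fun x y => Subtype.ext (add_mul x y o₁)
      map_smul' := fun c x => Subtype.ext (mul_assoc c x o₁) }
  let v : S →ₗ[S] (RingHom.ker (pr2 R I)) :=
    { toFun := fun x => ⟨x * o₂, memker2 x⟩
      map_add' := fun x y => Subtype.ext (add_mul x y o₂)
      map_smul' := fun c x => Subtype.ext (mul_assoc c x o₂) }
  have hu_surj : Function.Surjective u := by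
    rintro ⟨⟨⟨y1, y2⟩, hy⟩, hyk⟩
    have h1 : y1 = 0 := hyk
    have h2 : y2 ∈ I := by
      have h3 : y2 - y1 ∈ I := hy
      rwa [h1, sub_zero] at h3
    rw [ha, Ideal.mem_span_singleton'] at h2
    obtain ⟨r, hr⟩ := h2
    refine ⟨diag R I r, ?_⟩
    ext
    · show r * 0 = y1
      rw [mul_zero, h1]
    · show r * a = y2
      exact hr
  have hv_surj : Function.Surjective v := by
    rintro ⟨⟨⟨y1, y2⟩, hy⟩, hyk⟩
    have h2 : y2 = 0 := hyk
    have h1 : y1 ∈ I := by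
      have h3 : y2 - y1 ∈ I := hy
      rw [h2, zero_sub] at h3
      simpa using I.neg_mem h3
    rw [ha, Ideal.mem_span_singleton'] at h1
    obtain ⟨r, hr⟩ := h1
    refine ⟨diag R I r, ?_⟩
    ext
    · show r * a = y1
      exact hr
    · show r * 0 = y2
      rw [mul_zero, h2]
  have hu_ker : LinearMap.ker u = (RingHom.ker (pr2 R I) : Ideal S) := by
    ext x
    constructor
    · intro hx
      have hx' : (x * o₁ : S) = 0 := congrArg Subtype.val hx
      have hx2 : (x : R × R).2 * a = 0 := congrArg (fun z : S => (z : R × R).2) hx'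
      have : (x : R × R).2 = 0 := by
        rcases mul_eq_zero.mp hx2 with h | h
        · exact h
        · exact absurd h ha0
      exact this
    · intro hx
      have hx2 : (x : R × R).2 = 0 := hx
      have : (x * o₁ : S) = 0 := by
        ext
        · show (x : R × R).1 * 0 = 0
          rw [mul_zero]
        · show (x : R × R).2 * a = 0
          rw [hx2, zero_mul]
      exact Subtype.ext this
  have hv_ker : LinearMap.ker v = (RingHom.ker (pr1 R I) : Ideal S) := by
    ext x
    constructor
    · intro hx
      have hx' : (x * o₂ : S) = 0 := congrArg Subtype.val hx
      have hx1 : (x : R × R).1 * a = 0 := congrArg (fun z : S => (z : R × R).1) hx'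
      have : (x : R × R).1 = 0 := by
        rcases mul_eq_zero.mp hx1 with h | h
        · exact h
        · exact absurd h ha0
      exact this
    · intro hx
      have hx1 : (x : R × R).1 = 0 := hx
      have : (x * o₂ : S) = 0 := by
        ext
        · show (x : R × R).1 * a = 0
          rw [hx1, zero_mul]
        · show (x : R × R).2 * 0 = 0
          rw [mul_zero]
      exact Subtype.ext this
  refine ⟨o₁, o₂, rfl, rfl, ⟨u, fun x => rfl, hu_surj, hu_ker⟩,
    ⟨v, fun x => rfl, hv_surj, hv_ker⟩, ?_⟩
  intro m
  induction m with
  | zero =>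
    constructor
    · exact Module.Finite.of_surjective u hu_surj
    · exact Module.Finite.of_surjective v hv_surj
  | succ m ih =>
    constructor
    · refine NPresented_succ_of_surjective u hu_surj ?_
      rw [hu_ker]
      exact ih.2
    · refine NPresented_succ_of_surjective v hv_surj ?_
      rw [hv_ker]
      exact ih.1
end

section
/- If R ⋈ I is a coherent ring, then R is a coherent ring. -/
/-- A commutative ring is *coherent* if every finitely generated ideal is finitely
presented. -/
def IsCoherentRing (R : Type*) [CommRing R] : Prop :=
  ∀ J : Ideal R, J.FG → Module.FinitePresentation R J

/-- Coherence descends along ring retractions. -/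
theorem isCoherentRing_of_retract {R S : Type*} [CommRing R] [CommRing S]
    (π : S →+* R) (σ : R →+* S) (hπσ : ∀ r, π (σ r) = r)
    (h : IsCoherentRing S) : IsCoherentRing R := by
  classical
  intro J hJ
  obtain ⟨s, hs⟩ := hJ
  set ι := {x // x ∈ s}
  set a : ι → R := fun i => (i : R) with ha
  set b : ι → S := fun i => σ (a i) with hb
  set φ : (ι → R) →ₗ[R] R := Fintype.linearCombination R a with hφ
  set ψ : (ι → S) →ₗ[S] S := Fintype.linearCombination S b with hψ
  have hrφ : LinearMap.range φ = J := by
    rw [hφ, Fintype.range_linearCombination, ← hs]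
    congr 1
    ext x
    simp [ha, ι]
  set J' : Ideal S := Ideal.span (Set.range b) with hJ'
  have hJ'fg : J'.FG := Submodule.fg_span (Set.finite_range b)
  have hJ'fp : Module.FinitePresentation S J' := h J' hJ'fg
  have hrψ : LinearMap.range ψ = J' := by
    rw [hψ, Fintype.range_linearCombination, hJ']
  set l' : (ι → S) →ₗ[S] J' :=
    LinearMap.codRestrict (J'.restrictScalars S) ψ
      (fun x => by rw [Submodule.restrictScalars_mem, ← hrψ]; exact LinearMap.mem_range_self ψ x) with hl'
  have hl'surj : Function.Surjective l' := by
    rintro ⟨y, hy⟩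
    rw [← hrψ] at hy
    obtain ⟨x, hx⟩ := hy
    exact ⟨x, Subtype.ext hx⟩
  have hkerψ : (LinearMap.ker ψ).FG := by
    have := Module.FinitePresentation.fg_ker l' hl'surj
    rwa [show LinearMap.ker l' = LinearMap.ker ψ by ext x; show l' x = 0 ↔ ψ x = 0; rw [Subtype.ext_iff]; exact Iff.rfl] at this
  obtain ⟨T, hT⟩ := hkerψ
  have hπsurj : Function.Surjective π := fun r => ⟨σ r, hπσ r⟩
  have : RingHomSurjective π := ⟨hπsurj⟩
  set P : (ι → S) →ₛₗ[π] (ι → R) :=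
    { toFun := fun g i => π (g i)
      map_add' := fun g g' => by funext i; exact map_add π _ _
      map_smul' := fun t g => by funext i; exact map_mul π t (g i) } with hP
  have key : ∀ g : ι → S, φ (P g) = π (ψ g) := by
    intro g
    rw [hφ, hψ, Fintype.linearCombination_apply, Fintype.linearCombination_apply, map_sum]
    refine Finset.sum_congr rfl fun i _ => ?_
    show π (g i) * a i = π (g i • b i)
    rw [smul_eq_mul, map_mul π, hb, hπσ]
  have key2 : ∀ x : ι → R, ψ (fun i => σ (x i)) = σ (φ x) := by
    intro x
    rw [hφ, hψ, Fintype.linearCombination_apply, Fintype.linearCombination_apply, map_sum]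
    refine Finset.sum_congr rfl fun i _ => ?_
    show σ (x i) • b i = σ (x i • a i)
    rw [smul_eq_mul, smul_eq_mul, map_mul]
  have hkerφ : (LinearMap.ker φ) = Submodule.span R (P '' (T : Set (ι → S))) := by
    apply le_antisymm
    · intro x hx
      have hx' : (fun i => σ (x i)) ∈ LinearMap.ker ψ := by
        rw [LinearMap.mem_ker, key2, LinearMap.mem_ker.mp hx, map_zero]
      rw [← hT] at hx'
      have := Submodule.mem_map_of_mem (f := P) hx'
      rw [Submodule.map_span] at this
      have hPx : P (fun i => σ (x i)) = x := by
        funext i; exact hπσ (x i)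
      rwa [hPx] at this
    · rw [Submodule.span_le]
      rintro _ ⟨g, hg, rfl⟩
      have hg' : g ∈ LinearMap.ker ψ := by rw [← hT]; exact Submodule.subset_span hg
      rw [SetLike.mem_coe, LinearMap.mem_ker, key, LinearMap.mem_ker.mp hg', map_zero]
  have hkerφfg : (LinearMap.ker φ).FG := by
    rw [hkerφ]
    exact Submodule.fg_span ((T : Set (ι → S)).toFinite.image P)
  set l : (ι → R) →ₗ[R] J :=
    LinearMap.codRestrict (J.restrictScalars R) φ
      (fun x => by rw [Submodule.restrictScalars_mem, ← hrφ]; exact LinearMap.mem_range_self φ x) with hl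
  have hlsurj : Function.Surjective l := by
    rintro ⟨y, hy⟩
    rw [← hrφ] at hy
    obtain ⟨x, hx⟩ := hy
    exact ⟨x, Subtype.ext hx⟩
  have hkerl : (LinearMap.ker l).FG := by rwa [show LinearMap.ker l = LinearMap.ker φ by ext x; show l x = 0 ↔ φ x = 0; rw [Subtype.ext_iff]; exact Iff.rfl]
  exact Module.finitePresentation_of_surjective l hlsurj hkerl

/-- if `R ⋈ I` is coherent then `R` is coherent. -/
theorem coherent_of_dup_coherent (R : Type*) [CommRing R] (I : Ideal R) (hI : I ≠ ⊤)
    (h : IsCoherentRing (dup R I)) : IsCoherentRing R :=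
  isCoherentRing_of_retract ((RingHom.fst R R).comp (dup R I).subtype) (diag R I)
    (fun _ => rfl) h
end

section
/- If R is a coherent ring and I is a finitely generated proper ideal of R, then R ⋈ I is a coherent ring. -/
namespace DupCoherentAux
open Submodule LinearMap
section aux
variable {R : Type*} [CommRing R]

lemma fp_of_equiv {M N : Type*} [AddCommGroup M] [Module R M] [AddCommGroup N] [Module R N]
    (e : M ≃ₗ[R] N) [Module.FinitePresentation R M] : Module.FinitePresentation R N :=
  Module.finitePresentation_of_surjective e.toLinearMap e.surjective
    (by rw [LinearEquiv.ker]; exact Submodule.fg_bot)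

lemma fg_of_restrictScalars {S M : Type*} [Semiring S] [SMul R S] [AddCommGroup M]
    [Module R M] [Module S M] [IsScalarTower R S M] (p : Submodule S M)
    (h : (p.restrictScalars R).FG) : p.FG := by
  obtain ⟨s, hs⟩ := h
  refine ⟨s, le_antisymm (span_le.mpr ?_) fun x hx => ?_⟩
  · intro x hx
    have : x ∈ Submodule.span R (s : Set M) := Submodule.subset_span hx
    rw [hs] at this; exact this
  · have : x ∈ Submodule.span R (s : Set M) := by rw [hs]; exact hx
    exact Submodule.span_le_restrictScalars R S (s : Set M) this

lemma fp_prod_step {M : Type*} [AddCommGroup M] [Module R M]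
    (hR : IsCoherentRing R)
    (hM : ∀ N : Submodule R M, N.FG → Module.FinitePresentation R N)
    (N : Submodule R (M × R)) (hN : N.FG) : Module.FinitePresentation R N := by
  haveI : Module.Finite R N := Module.Finite.iff_fg.mpr hN
  set l : N →ₗ[R] R := (LinearMap.snd R M R) ∘ₗ N.subtype with hl
  have hJfg : (LinearMap.range l).FG := by
    rw [← Submodule.map_top]
    exact Submodule.FG.map l (Module.Finite.iff_fg.mp (Module.Finite.top R N))
  haveI : Module.FinitePresentation R (LinearMap.range l) := hR _ hJfg
  have hsurj : Function.Surjective l.rangeRestrict := l.surjective_rangeRestrict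
  have hker : (LinearMap.ker l).FG := by
    rw [← LinearMap.ker_rangeRestrict]
    exact Module.FinitePresentation.fg_ker l.rangeRestrict hsurj
  -- image of ker l inside M × R
  set P : Submodule R (M × R) := (LinearMap.ker l).map N.subtype with hP
  have hPfg : P.FG := hker.map _
  have hP2 : ∀ x ∈ P, Prod.snd x = 0 := by
    rintro x ⟨y, hy, rfl⟩
    simpa [hl] using hy
  set g : P →ₗ[R] M := (LinearMap.fst R M R) ∘ₗ P.subtype with hg
  have hginj : Function.Injective g := by
    intro a b hab
    ext : 1
    refine Prod.ext hab ?_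
    rw [hP2 _ a.2, hP2 _ b.2]
  have hrange : LinearMap.range g = P.map (LinearMap.fst R M R) := by
    rw [hg, LinearMap.range_comp, Submodule.range_subtype]
  haveI : Module.FinitePresentation R (P.map (LinearMap.fst R M R)) :=
    hM _ (hPfg.map _)
  haveI : Module.FinitePresentation R (LinearMap.range g) := by
    rw [hrange]; infer_instance
  haveI fpP : Module.FinitePresentation R P :=
    fp_of_equiv (LinearEquiv.ofInjective g hginj).symm
  haveI fpP' : Module.FinitePresentation R ((LinearMap.ker l).map N.subtype) := hP ▸ fpP
  haveI : Module.FinitePresentation R (LinearMap.ker l) :=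
    fp_of_equiv (M := ↥((LinearMap.ker l).map N.subtype)) (N := ↥(LinearMap.ker l))
      (Submodule.equivMapOfInjective N.subtype (Submodule.injective_subtype N)
      (LinearMap.ker l)).symm
  haveI : Module.FinitePresentation R (LinearMap.ker l.rangeRestrict) := by
    rw [LinearMap.ker_rangeRestrict]; infer_instance
  exact Module.finitePresentation_of_ker l.rangeRestrict hsurj

lemma fp_submodule_sq (hR : IsCoherentRing R) (N : Submodule R (R × R)) (hN : N.FG) :
    Module.FinitePresentation R N :=
  fp_prod_step hR (fun J hJ => hR J hJ) N hN

end aux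

section main
variable {R : Type*} [CommRing R] (I : Ideal R)

local notation "S" => dup R I

noncomputable section

/-- The `R`-algebra structure on `dup R I` via `diag`. -/
local instance dupAlgebra : Algebra R S := (diag R I).toAlgebra

lemma diag_coe (r : R) : ((_root_.diag R I r : S) : R × R) = (r, r) := rfl

lemma dup_coe_smul (r : R) (x : S) : ((r • x : S) : R × R) = r • (x : R × R) := by
  show ((_root_.diag R I r * x : S) : R × R) = _
  ext <;> simp [diag_coe]

/-- The inclusion `dup R I → R × R` as an `R`-linear map. -/
def dupIncl : S →ₗ[R] R × R where
  toFun x := (x : R × R)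
  map_add' _ _ := rfl
  map_smul' r x := dup_coe_smul I r x

lemma dupIncl_injective : Function.Injective (dupIncl I) := Subtype.val_injective

/-- `I → dup R I`, `i ↦ (0, i)`, as an `R`-linear map. -/
def dupPhi : I →ₗ[R] S where
  toFun i := ⟨(0, (i : R)), show (i : R) - 0 ∈ I by simpa using i.2⟩
  map_add' a b := by ext : 1 <;> simp
  map_smul' r a := by
    apply Subtype.ext
    rw [dup_coe_smul]
    ext <;> simp

lemma dup_finite (hFG : I.FG) : Module.Finite R S := by
  haveI : Module.Finite R I := Module.Finite.iff_fg.mpr hFG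
  have h1 : (Submodule.span R {(1 : S)}).FG := ⟨{1}, by simp⟩
  have h2 : (LinearMap.range (dupPhi I)).FG := by
    rw [← Submodule.map_top]
    exact Submodule.FG.map _ (Module.Finite.iff_fg.mp (Module.Finite.top R I))
  rw [Module.finite_def]
  have : (⊤ : Submodule R S) = Submodule.span R {(1 : S)} ⊔ LinearMap.range (dupPhi I) := by
    refine le_antisymm (fun s _ => ?_) le_top
    have key : s = (s : R × R).1 • (1 : S) + dupPhi I ⟨(s : R × R).2 - (s : R × R).1, s.2⟩ := by
      apply Subtype.ext
      show (s : R × R) = _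
      ext <;> simp [dupPhi, dup_coe_smul]
    rw [key]
    exact Submodule.add_mem _
      (Submodule.mem_sup_left (Submodule.smul_mem _ _ (Submodule.mem_span_singleton_self _)))
      (Submodule.mem_sup_right (LinearMap.mem_range_self _ _))
  rw [this]
  exact Submodule.FG.sup h1 h2

lemma dup_fp (hR : IsCoherentRing R) (hFG : I.FG) : Module.FinitePresentation R S := by
  haveI := dup_finite I hFG
  have hfg : (LinearMap.range (dupIncl I)).FG := by
    rw [← Submodule.map_top]
    exact Submodule.FG.map _ (Module.Finite.iff_fg.mp (Module.Finite.top R S))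
  haveI := fp_submodule_sq hR _ hfg
  exact fp_of_equiv (M := ↥(LinearMap.range (dupIncl I))) (N := S)
    (LinearEquiv.ofInjective (dupIncl I) (dupIncl_injective I)).symm

end
end main

set_option synthInstance.maxHeartbeats 1000000 in
set_option maxHeartbeats 1600000 in
theorem dup_coherent_aux (R : Type*) [CommRing R] (I : Ideal R) (hI : I ≠ ⊤)
    (hR : IsCoherentRing R) (hFG : I.FG) : IsCoherentRing (dup R I) := by
  intro J hJ
  letI : Algebra R ↥(dup R I) := (_root_.diag R I).toAlgebra
  haveI hSfin : Module.Finite R ↥(dup R I) := dup_finite I hFG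
  haveI hSfp : Module.FinitePresentation R ↥(dup R I) := dup_fp I hR hFG
  haveI : Module.Finite (dup R I) J := Module.Finite.iff_fg.mpr hJ
  haveI : Module.Finite R ↥J := Module.Finite.trans ↥(dup R I) ↥J
  -- `J` is finitely presented as an `R`-module
  set ι : ↥J →ₗ[R] R × R := (dupIncl I) ∘ₗ ((J.subtype).restrictScalars R) with hι
  have hιinj : Function.Injective ι := by
    apply Function.Injective.comp (dupIncl_injective I)
    exact Submodule.injective_subtype J
  have hfg : (LinearMap.range ι).FG := by
    rw [← Submodule.map_top]
    exact Submodule.FG.map _ (Module.Finite.iff_fg.mp (Module.Finite.top R ↥J))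
  haveI := fp_submodule_sq hR _ hfg
  haveI : Module.FinitePresentation R ↥J :=
    fp_of_equiv (M := ↥(LinearMap.range ι)) (N := ↥J)
      (LinearEquiv.ofInjective ι hιinj).symm
  obtain ⟨n, f, hf⟩ := Module.Finite.exists_fin' (dup R I) ↥J
  refine Module.finitePresentation_of_free_of_surjective f hf ?_
  apply fg_of_restrictScalars (R := R)
  rw [← LinearMap.ker_restrictScalars]
  exact Module.FinitePresentation.fg_ker (f.restrictScalars R) hf

end DupCoherentAux

/-- if `R` is coherent and `I` is a finitely generated proper ideal of `R`,
then `R ⋈ I` is coherent. -/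
theorem dup_coherent_of_coherent (R : Type*) [CommRing R] (I : Ideal R) (hI : I ≠ ⊤)
    (hR : IsCoherentRing R) (hFG : I.FG) : IsCoherentRing (dup R I) :=
  DupCoherentAux.dup_coherent_aux R I hI hR hFG
end

section
/- Suppose I contains a regular (non-zero-divisor) element of R. Then R ⋈ I is coherent if and only if R is coherent and I is a finitely generated ideal of R. In particular, for m a regular element of I, the annihilator of (m, 0) in R ⋈ I equals O₁ = {(0, i) : i ∈ I}. -/
section dupbasic
variable (R : Type*) [CommRing R] (I : Ideal R)

instance dupAlgebra : Algebra R (dup R I) := (diag R I).toAlgebra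

lemma dup_smul_def (r : R) (x : dup R I) : r • x = diag R I r * x := rfl

/-- The inclusion `dup R I → R × R` as an `R`-linear map. -/
def dupIncl : dup R I →ₗ[R] R × R where
  toFun x := x.val
  map_add' _ _ := rfl
  map_smul' r x := by
    show ((diag R I r * x : dup R I) : R × R) = r • (x : R × R)
    ext <;> simp [diag, mul_comm]

lemma dupIncl_injective : Function.Injective (dupIncl R I) := Subtype.val_injective

/-- first projection as a ring hom -/
def dupFst : dup R I →+* R := (RingHom.fst R R).comp (dup R I).subtype

/-- second projection as a ring hom -/
def dupSnd : dup R I →+* R := (RingHom.snd R R).comp (dup R I).subtype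

lemma dupFst_diag (r : R) : dupFst R I (diag R I r) = r := rfl
lemma dupSnd_diag (r : R) : dupSnd R I (diag R I r) = r := rfl

lemma dupFst_surjective : Function.Surjective (dupFst R I) := fun r => ⟨diag R I r, rfl⟩
lemma dupSnd_surjective : Function.Surjective (dupSnd R I) := fun r => ⟨diag R I r, rfl⟩

instance : RingHomSurjective (dupFst R I) := ⟨dupFst_surjective R I⟩
instance : RingHomSurjective (dupSnd R I) := ⟨dupSnd_surjective R I⟩

lemma finite_dup (hI : I.FG) : Module.Finite R (dup R I) := by
  constructor
  apply Submodule.fg_of_fg_map_injective _ (dupIncl_injective R I)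
  have heq : (⊤ : Submodule R (dup R I)).map (dupIncl R I)
      = Submodule.span R {((1 : R), (1 : R))} ⊔ Submodule.map (LinearMap.inr R R R) I := by
    apply le_antisymm
    · rintro _ ⟨⟨⟨a, b⟩, hab⟩, -, rfl⟩
      apply Submodule.mem_sup.mpr
      refine ⟨a • ((1 : R), (1 : R)), Submodule.smul_mem _ _ (Submodule.mem_span_singleton_self _),
        (0, b - a), ⟨b - a, hab, rfl⟩, ?_⟩
      show (a • ((1:R),(1:R))) + ((0 : R), b - a) = dupIncl R I ⟨(a, b), hab⟩
      have : dupIncl R I ⟨(a, b), hab⟩ = (a, b) := rfl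
      rw [this]; ext <;> simp
    · intro x hx
      obtain ⟨y, hy, z, hz, rfl⟩ := Submodule.mem_sup.mp hx
      obtain ⟨c, rfl⟩ := Submodule.mem_span_singleton.mp hy
      obtain ⟨i, hi, rfl⟩ := hz
      have hmem : ((c • ((1:R),(1:R)) + LinearMap.inr R R R i : R × R)) ∈ dup R I := by
        show (c • (1:R) + i) - (c • (1:R) + 0) ∈ I
        simpa using hi
      exact ⟨⟨_, hmem⟩, trivial, rfl⟩
  rw [heq]
  exact Submodule.FG.sup (Submodule.fg_span_singleton _) (Submodule.FG.map _ hI)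

end dupbasic

section transfer
variable {R S : Type*} [CommRing R] [CommRing S]

lemma fg_of_restrictScalars [Algebra R S] {M : Type*} [AddCommGroup M] [Module S M] [Module R M]
    [IsScalarTower R S M] (N : Submodule S M) (h : (N.restrictScalars R).FG) : N.FG := by
  obtain ⟨t, ht⟩ := h
  refine ⟨t, le_antisymm (Submodule.span_le.mpr fun x hx => ?_) fun x hx => ?_⟩
  · exact (ht ▸ Submodule.subset_span hx : x ∈ N.restrictScalars R)
  · exact Submodule.span_le_restrictScalars R S (t : Set M) (ht.symm ▸ (hx : x ∈ N.restrictScalars R))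

lemma fg_map_semilinear {σ : R →+* S} [RingHomSurjective σ] {M N : Type*}
    [AddCommGroup M] [Module R M] [AddCommGroup N] [Module S N]
    (f : M →ₛₗ[σ] N) {p : Submodule R M} (hp : p.FG) : (p.map f).FG := by
  classical
  obtain ⟨t, ht⟩ := hp
  exact ⟨t.image f, by rw [Finset.coe_image, ← Submodule.map_span, ht]⟩

end transfer


section aux
variable {R : Type*} [CommRing R]

lemma fp_of_equiv {M N : Type*} [AddCommGroup M] [Module R M] [AddCommGroup N] [Module R N]
    (h : Module.FinitePresentation R M) (e : M ≃ₗ[R] N) : Module.FinitePresentation R N := by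
  haveI := h
  exact Module.finitePresentation_of_surjective e.toLinearMap e.surjective
    (by rw [LinearMap.ker_eq_bot.mpr e.injective]; exact Submodule.fg_bot)

/-- a finite module embedding into R is f.p. over a coherent ring -/
lemma fp_of_injective_to_R (h : IsCoherentRing R) {M : Type*} [AddCommGroup M] [Module R M]
    [Module.Finite R M] (f : M →ₗ[R] R) (hf : Function.Injective f) :
    Module.FinitePresentation R M := by
  have hJ : (LinearMap.range f).FG := by
    rw [← Submodule.map_top]
    exact Module.Finite.fg_top.map f
  exact fp_of_equiv (h _ hJ) (LinearEquiv.ofInjective f hf).symm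

/-- a f.g. submodule of `R × R` is f.p. over a coherent ring -/
lemma fp_fg_submodule_prod (h : IsCoherentRing R) (N : Submodule R (R × R)) (hN : N.FG) :
    Module.FinitePresentation R N := by
  haveI : Module.Finite R N := Module.Finite.iff_fg.mpr hN
  set f : N →ₗ[R] R := (LinearMap.snd R R R).comp N.subtype with hf
  have hJ : (LinearMap.range f).FG := by
    rw [← Submodule.map_top]; exact Module.Finite.fg_top.map f
  haveI : Module.FinitePresentation R (LinearMap.range f) := h _ hJ
  have hker : (LinearMap.ker f.rangeRestrict).FG :=
    Module.FinitePresentation.fg_ker _ f.surjective_rangeRestrict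
  rw [LinearMap.ker_rangeRestrict] at hker
  haveI : Module.Finite R (LinearMap.ker f) := Module.Finite.iff_fg.mpr hker
  set g : LinearMap.ker f →ₗ[R] R :=
    (LinearMap.fst R R R).comp (N.subtype.comp (LinearMap.ker f).subtype) with hg
  have hgbot : LinearMap.ker g = ⊥ := by
    rw [Submodule.eq_bot_iff]
    rintro ⟨⟨⟨x1, x2⟩, hxN⟩, hxk⟩ hx
    have h2 : x2 = 0 := hxk
    have h1 : x1 = 0 := hx
    ext <;> simp [h1, h2]
  have hginj : Function.Injective g := (LinearMap.ker_eq_bot (M := LinearMap.ker f) (f := g)).mp hgbot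
  haveI : Module.FinitePresentation R (LinearMap.ker f) := fp_of_injective_to_R (M := LinearMap.ker f) h g hginj
  haveI : Module.FinitePresentation R (LinearMap.ker f.rangeRestrict) := by
    rw [LinearMap.ker_rangeRestrict]; infer_instance
  exact Module.finitePresentation_of_ker f.rangeRestrict f.surjective_rangeRestrict

end aux

section main
variable (R : Type*) [CommRing R] (I : Ideal R)

set_option maxHeartbeats 1000000 in
set_option synthInstance.maxHeartbeats 100000 in
lemma coherent_dup (hR : IsCoherentRing R) (hI : I.FG) : IsCoherentRing (dup R I) := by
  haveI : Module.Finite R (dup R I) := finite_dup R I hI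
  intro J hJ
  haveI tower : IsScalarTower R (dup R I) (dup R I) := IsScalarTower.right
  haveI : Module.Finite (dup R I) J := Module.Finite.iff_fg.mpr hJ
  haveI : Module.Finite R J := Module.Finite.trans (dup R I) J
  -- `J` is finitely presented as an `R`-module
  let e : J →ₗ[R] R × R := (dupIncl R I) ∘ₗ (J.subtype.restrictScalars R)
  have he : Function.Injective e :=
    (dupIncl_injective R I).comp Subtype.val_injective
  have hrfg : (LinearMap.range e).FG := by
    rw [← Submodule.map_top]; exact Module.Finite.fg_top.map e
  haveI hfpJ : Module.FinitePresentation R J :=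
    fp_of_equiv (fp_fg_submodule_prod hR _ hrfg) (LinearEquiv.ofInjective e he).symm
  -- now build the S-presentation
  obtain ⟨s, hs⟩ := Module.Finite.fg_top (R := dup R I) (M := J)
  refine ⟨⟨s, hs, ?_⟩⟩
  set π := Finsupp.linearCombination (dup R I) ((↑) : s → J) with hπdef
  have Hπ : Function.Surjective π := LinearMap.range_eq_top.mp
    (by rw [Finsupp.range_linearCombination, Subtype.range_val, ← hs])
  apply fg_of_restrictScalars (R := R)
  haveI : Module.Finite R (↥(s : Finset J) →₀ (dup R I)) := Module.Finite.trans (dup R I) _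
  have hk := Module.FinitePresentation.fg_ker (R := R) (π.restrictScalars R) Hπ
  rwa [LinearMap.ker_restrictScalars] at hk

end main

section main2
variable (R : Type*) [CommRing R] (I : Ideal R)

lemma dup_mul_m (m : R) (hm : m ∈ I) (hreg : m ∈ nonZeroDivisors R)
    (hmem : ((m, 0) : R × R) ∈ dup R I) (x : dup R I) :
    x * ⟨(m, 0), hmem⟩ = 0 ↔ ((x : R × R).1 = 0 ∧ (x : R × R).2 ∈ I) := by
  constructor
  · intro hx
    have h1 : (x : R × R).1 * m = 0 := by
      simpa using congrArg (fun y : dup R I => (y : R × R).1) hx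
    have hx1 : (x : R × R).1 = 0 := (mem_nonZeroDivisors_iff_right.mp hreg) _ h1
    have h2 : (x : R × R).2 - (x : R × R).1 ∈ I := x.2
    rw [hx1, sub_zero] at h2
    exact ⟨hx1, h2⟩
  · rintro ⟨h1, -⟩
    apply Subtype.ext
    apply Prod.ext
    · show (x : R × R).1 * m = 0; rw [h1, zero_mul]
    · show (x : R × R).2 * 0 = 0; rw [mul_zero]

set_option maxHeartbeats 1000000 in
set_option synthInstance.maxHeartbeats 200000 in
lemma fg_I (h : IsCoherentRing (dup R I)) (m : R) (hm : m ∈ I) (hreg : m ∈ nonZeroDivisors R) :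
    I.FG := by
  have hmem : ((m, 0) : R × R) ∈ dup R I := by
    show (0 : R) - m ∈ I; simpa using I.neg_mem hm
  set z : dup R I := ⟨(m, 0), hmem⟩ with hz
  set μ : dup R I →ₗ[dup R I] dup R I := LinearMap.toSpanSingleton _ _ z with hμ
  have hrange : (LinearMap.range μ).FG := by
    rw [← LinearMap.span_singleton_eq_range]
    exact Submodule.fg_span_singleton z
  haveI : Module.FinitePresentation (dup R I) (LinearMap.range μ) := h _ hrange
  have hker : (LinearMap.ker μ).FG := by
    have := Module.FinitePresentation.fg_ker μ.rangeRestrict μ.surjective_rangeRestrict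
    rwa [LinearMap.ker_rangeRestrict] at this
  have hmap : I = Ideal.map (dupSnd R I) (LinearMap.ker μ) := by
    apply le_antisymm
    · intro i hi
      have hmem2 : ((0, i) : R × R) ∈ dup R I := by show i - 0 ∈ I; simpa using hi
      have hk : (⟨(0, i), hmem2⟩ : dup R I) ∈ LinearMap.ker μ := by
        show (⟨(0, i), hmem2⟩ : dup R I) • z = 0
        rw [smul_eq_mul]
        apply Subtype.ext
        show ((0 * m : R), (i * 0 : R)) = ((0 : R), (0 : R))
        simp
      exact Ideal.mem_map_of_mem _ hk
    · rw [Ideal.map_le_iff_le_comap]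
      intro x hx
      have hx' : x * z = 0 := by rw [← smul_eq_mul]; exact hx
      exact ((dup_mul_m R I m hm hreg hmem x).mp hx').2
  rw [hmap]
  exact Ideal.FG.map hker _

end main2

section main3
variable (R : Type*) [CommRing R] (I : Ideal R)

set_option maxHeartbeats 1000000 in
set_option synthInstance.maxHeartbeats 200000 in
lemma coherent_R (h : IsCoherentRing (dup R I)) : IsCoherentRing R := by
  classical
  intro J hJ
  obtain ⟨t, ht⟩ := hJ
  rw [← ht]
  set ζ : (↥t →₀ dup R I) →ₗ[dup R I] dup R I :=
    Finsupp.linearCombination (dup R I) (fun i : ↥t => diag R I i.1) with hζdef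
  have hrζ : (LinearMap.range ζ).FG := by
    rw [Finsupp.range_linearCombination]
    exact Submodule.fg_span (Set.finite_range _)
  haveI : Module.FinitePresentation (dup R I) (LinearMap.range ζ) := h _ hrζ
  have hkζ : (LinearMap.ker ζ).FG := by
    have := Module.FinitePresentation.fg_ker ζ.rangeRestrict ζ.surjective_rangeRestrict
    rwa [LinearMap.ker_rangeRestrict] at this
  -- the coefficientwise first-projection, as a semilinear map
  set P : (↥t →₀ dup R I) →ₛₗ[dupFst R I] (↥t →₀ R) :=
    { toFun := fun x => x.mapRange (dupFst R I) (map_zero _)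
      map_add' := fun x y => by ext a; simp [Finsupp.mapRange_apply]
      map_smul' := fun s x => by
        ext a
        simp [Finsupp.mapRange_apply, smul_eq_mul] } with hPdef
  set φ₀ : (↥t →₀ R) →ₗ[R] R := Finsupp.linearCombination R ((↑) : ↥t → R) with hφ₀def
  have key : ∀ x, φ₀ (P x) = dupFst R I (ζ x) := by
    intro x
    induction x using Finsupp.induction_linear with
    | zero => simp
    | add a b ha hb => simp only [map_add, ha, hb]
    | single a s =>
      show φ₀ (Finsupp.mapRange (dupFst R I) (map_zero _) (Finsupp.single a s))
        = dupFst R I (ζ (Finsupp.single a s))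
      rw [Finsupp.mapRange_single, hζdef]
      simp only [Finsupp.linearCombination_single, hφ₀def, smul_eq_mul, map_mul]
      rfl
  -- the coefficientwise diagonal lift, as an `R`-linear map
  set L : (↥t →₀ R) →ₗ[R] (↥t →₀ dup R I) :=
    { toFun := fun x => x.mapRange (diag R I) (map_zero _)
      map_add' := fun x y => by
        ext a <;> simp [Finsupp.mapRange_apply, Finsupp.add_apply]
      map_smul' := fun r x => by
        apply Finsupp.ext; intro a
        apply Subtype.ext
        rfl } with hLdef
  have keyL : ∀ x, ζ (L x) = diag R I (φ₀ x) := by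
    intro x
    induction x using Finsupp.induction_linear with
    | zero => simp
    | add a b ha hb => simp only [map_add, ha, hb]
    | single a r =>
      show ζ (Finsupp.mapRange (diag R I) (map_zero _) (Finsupp.single a r))
        = diag R I (φ₀ (Finsupp.single a r))
      rw [Finsupp.mapRange_single, hζdef]
      simp only [Finsupp.linearCombination_single, hφ₀def, smul_eq_mul, map_mul]
  have hker0 : LinearMap.ker φ₀ = Submodule.map P (LinearMap.ker ζ) := by
    ext x
    simp only [LinearMap.mem_ker, Submodule.mem_map]
    constructor
    · intro hx
      refine ⟨L x, ?_, ?_⟩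
      · show ζ (L x) = 0
        rw [keyL, hx, map_zero]
      · ext a
        rfl
    · rintro ⟨y, hy, rfl⟩
      rw [key, hy, map_zero]
  have hfg0 : (LinearMap.ker φ₀).FG := hker0 ▸ fg_map_semilinear P hkζ
  -- build the presentation of `span R ↑t`
  set φJ : (↥t →₀ R) →ₗ[R] (Submodule.span R (t : Set R)) :=
    Finsupp.linearCombination R (fun i : ↥t => ⟨i.1, Submodule.subset_span i.2⟩) with hφJdef
  have hcomp : (Submodule.span R (t : Set R)).subtype ∘ₗ φJ = φ₀ := by
    apply Finsupp.lhom_ext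
    intro a b
    simp [hφJdef, hφ₀def, Finsupp.linearCombination_single]
  have hsurj : Function.Surjective φJ := by
    rw [← LinearMap.range_eq_top]
    apply Submodule.map_injective_of_injective (Submodule.injective_subtype _)
    rw [Submodule.map_top, Submodule.range_subtype, ← LinearMap.range_comp, hcomp,
      hφ₀def, Finsupp.range_linearCombination, Subtype.range_val]
  have hkerJ : (LinearMap.ker φJ).FG := by
    have heq : LinearMap.ker φ₀ = LinearMap.ker φJ := by
      rw [← hcomp, LinearMap.ker_comp, Submodule.ker_subtype]
      rfl
    rw [← heq]; exact hfg0
  exact Module.finitePresentation_of_free_of_surjective φJ hsurj hkerJ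

end main3

/-- if `I` contains a regular element, then `R ⋈ I` is coherent iff `R` is
coherent and `I` is finitely generated; moreover for a regular element `m ∈ I`, the
annihilator of `(m, 0)` in `R ⋈ I` is `O₁ = {(0, i) : i ∈ I}`. -/
theorem dup_coherent_iff_of_regular (R : Type*) [CommRing R] (I : Ideal R) (hI : I ≠ ⊤)
    (hreg : ∃ m ∈ I, m ∈ nonZeroDivisors R) :
    (IsCoherentRing (dup R I) ↔ IsCoherentRing R ∧ I.FG) ∧
    ∀ m (hm : m ∈ I), m ∈ nonZeroDivisors R →
      ∀ x : dup R I,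
        x * ⟨(m, 0), show (0 : R) - m ∈ I by simpa using I.neg_mem hm⟩ = 0 ↔
          ((x : R × R).1 = 0 ∧ (x : R × R).2 ∈ I) := by
  obtain ⟨m0, hm0, hreg0⟩ := hreg
  constructor
  · constructor
    · intro h
      exact ⟨coherent_R R I h, fg_I R I h m0 hm0 hreg0⟩
    · rintro ⟨h1, h2⟩
      exact coherent_dup R I h1 h2
  · intro m hm hregm x
    exact dup_mul_m R I m hm hregm _ x
end
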